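/- arXiv:2603.25961 — 2 statements merged into one kernel-verified Lean document; each statement's English description precedes it below -/
import Mathlib

section
/- For every ε ≥ 0 and every real X ≥ 1, S_ε(X) = ∑_{ℓ ≤ X} μ²(ℓ) · φ_{1+ε}(ℓ)/ℓ^{2+2ε} · m_ℓ(X/ℓ; 1+ε)², where the sum runs over positive integers ℓ ≤ X. In particular S_ε(X) ≥ 0. -/
/-- `S_ε(X) = ∑_{d ≤ X} ∑_{e ≤ X} μ(d) μ(e) / lcm(d,e)^{1+ε}`. -/
noncomputable def Seps (ε X : ℝ) : ℝ :=
  ∑ d ∈ Finset.Icc 1 ⌊X⌋₊, ∑ e ∈ Finset.Icc 1 ⌊X⌋₊,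
    ((ArithmeticFunction.moebius d : ℝ) * (ArithmeticFunction.moebius e : ℝ)) /
      (Nat.lcm d e : ℝ) ^ (1 + ε)

/-- `m_q(X; s) = ∑_{ℓ ≤ X, gcd(ℓ,q)=1} μ(ℓ)/ℓ^s`. -/
noncomputable def mqs (q : ℕ) (X s : ℝ) : ℝ :=
  ∑ ℓ ∈ (Finset.Icc 1 ⌊X⌋₊).filter (fun ℓ => Nat.gcd ℓ q = 1),
    (ArithmeticFunction.moebius ℓ : ℝ) / (ℓ : ℝ) ^ s

/-- Generalised Euler function `φ_s(q) = q^s ∏_{p ∣ q} (1 - p^{-s})`. -/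
noncomputable def phis (s : ℝ) (q : ℕ) : ℝ :=
  (q : ℝ) ^ s * ∏ p ∈ q.primeFactors, (1 - 1 / (p : ℝ) ^ s)

open Finset ArithmeticFunction

lemma sqfree_prod_primes (s : Finset ℕ) (hs : ∀ p ∈ s, p.Prime) : Squarefree (∏ p ∈ s, p) := by
  have h0 : ∏ p ∈ s, p ≠ 0 := Finset.prod_ne_zero_iff.mpr fun p hp => (hs p hp).ne_zero
  rw [Nat.squarefree_iff_factorization_le_one h0]
  intro q
  rw [Nat.factorization_prod (fun p hp => (hs p hp).ne_zero), Finset.sum_apply']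
  calc ∑ p ∈ s, (Nat.factorization p) q ≤ ∑ p ∈ s, if p = q then 1 else 0 := by
        apply Finset.sum_le_sum
        intro p hp
        rw [(hs p hp).factorization]
        simp [Finsupp.single_apply]
    _ ≤ 1 := by rw [Finset.sum_ite_eq' s q (fun _ => 1)]; split <;> simp

noncomputable def Fs (s : ℝ) : ArithmeticFunction ℝ :=
  ⟨fun d => if d = 0 then 0 else 1 / (d : ℝ) ^ s, by simp⟩

lemma Fs_apply (s : ℝ) {d : ℕ} (hd : d ≠ 0) : Fs s d = 1 / (d : ℝ) ^ s := by
  simp [Fs, hd]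

lemma Fs_mult (s : ℝ) : (Fs s).IsMultiplicative := by
  constructor
  · simp [Fs]
  · intro m n hmn
    rcases eq_or_ne m 0 with rfl | hm
    · simp [Fs]
    rcases eq_or_ne n 0 with rfl | hn
    · simp [Fs]
    rw [Fs_apply s hm, Fs_apply s hn, Fs_apply s (Nat.mul_ne_zero hm hn)]
    rw [Nat.cast_mul, Real.mul_rpow (Nat.cast_nonneg m) (Nat.cast_nonneg n)]
    rw [one_div, one_div, one_div, mul_inv]

lemma moebius_sum_eq_prod (s : ℝ) {n : ℕ} (hn : n ≠ 0) :
    ∑ d ∈ n.divisors, (moebius d : ℝ) * (1 / (d : ℝ) ^ s) =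
      ∏ p ∈ n.primeFactors, (1 - 1 / (p : ℝ) ^ s) := by
  set r := ∏ p ∈ n.primeFactors, p with hr_def
  have hprimes : ∀ p ∈ n.primeFactors, p.Prime := fun p hp => Nat.prime_of_mem_primeFactors hp
  have hr : Squarefree r := sqfree_prod_primes _ hprimes
  have hpf : r.primeFactors = n.primeFactors := Nat.primeFactors_prod hprimes
  have hdiv : n.divisors.filter Squarefree = r.divisors := by
    ext d
    simp only [Finset.mem_filter, Nat.mem_divisors]
    constructor
    · rintro ⟨⟨hdn, -⟩, hsq⟩
      refine ⟨?_, hr.ne_zero⟩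
      calc d = ∏ p ∈ d.primeFactors, p := (Nat.prod_primeFactors_of_squarefree hsq).symm
        _ ∣ r := Finset.prod_dvd_prod_of_subset _ _ _ (Nat.primeFactors_mono hdn hn)
    · rintro ⟨hdr, -⟩
      exact ⟨⟨hdr.trans (Nat.prod_primeFactors_dvd n), hn⟩, hr.squarefree_of_dvd hdr⟩
  rw [← Finset.sum_filter_of_ne (p := Squarefree)
      (fun d _ hne => by
        by_contra hsq
        exact hne (by rw [moebius_eq_zero_of_not_squarefree hsq]; simp)), hdiv]
  calc ∑ d ∈ r.divisors, (moebius d : ℝ) * (1 / (d : ℝ) ^ s)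
      = ∑ d ∈ r.divisors, (moebius d : ℝ) * Fs s d := by
        refine Finset.sum_congr rfl fun d hd => ?_
        rw [Fs_apply s (Nat.pos_of_mem_divisors hd).ne']
    _ = ∏ p ∈ r.primeFactors, (1 - Fs s p) :=
        (ArithmeticFunction.IsMultiplicative.prodPrimeFactors_one_sub_of_squarefree
          (Fs s) (Fs_mult s) hr).symm
    _ = ∏ p ∈ n.primeFactors, (1 - 1 / (p : ℝ) ^ s) := by
        rw [hpf]
        refine Finset.prod_congr rfl fun p hp => ?_
        rw [Fs_apply s (hprimes p hp).ne_zero]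

lemma sum_phis (s : ℝ) : ∀ n : ℕ, 0 < n → ∑ ℓ ∈ n.divisors, phis s ℓ = (n : ℝ) ^ s := by
  have := (ArithmeticFunction.sum_eq_iff_sum_smul_moebius_eq
    (f := fun n => phis s n) (g := fun n => (n : ℝ) ^ s)).mpr
  refine fun n hn => this ?_ n hn
  intro n hn
  have hn0 : n ≠ 0 := hn.ne'
  rw [Nat.sum_divisorsAntidiagonal (f := fun a b => (moebius a) • ((b : ℝ) ^ s))]
  have hcongr : ∀ a ∈ n.divisors, (moebius a) • (((n / a : ℕ) : ℝ)) ^ s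
      = (n : ℝ) ^ s * ((moebius a : ℝ) * (1 / (a : ℝ) ^ s)) := by
    intro a ha
    obtain ⟨hdvd, -⟩ := Nat.mem_divisors.mp ha
    have ha0 : (a : ℕ) ≠ 0 := (Nat.pos_of_mem_divisors ha).ne'
    rw [Nat.cast_div hdvd (Nat.cast_ne_zero.mpr ha0),
      Real.div_rpow (Nat.cast_nonneg n) (Nat.cast_nonneg a), zsmul_eq_mul]
    rw [div_eq_mul_inv, ← one_div]
    ring
  rw [Finset.sum_congr rfl hcongr, ← Finset.mul_sum, moebius_sum_eq_prod s hn0, phis]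

lemma gcd_expand (s : ℝ) (N d e : ℕ) (hd : d ∈ Finset.Icc 1 N) (_he : e ∈ Finset.Icc 1 N) :
    ((Nat.gcd d e : ℝ)) ^ s = ∑ ℓ ∈ Finset.Icc 1 N, if ℓ ∣ d ∧ ℓ ∣ e then phis s ℓ else 0 := by
  obtain ⟨hd1, hdN⟩ := Finset.mem_Icc.mp hd
  have hdpos : 0 < d := hd1
  have hg : 0 < Nat.gcd d e := Nat.gcd_pos_of_pos_left _ hdpos
  have hset : (Finset.Icc 1 N).filter (fun ℓ => ℓ ∣ d ∧ ℓ ∣ e) = (Nat.gcd d e).divisors := by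
    ext ℓ
    simp only [Finset.mem_filter, Finset.mem_Icc, Nat.mem_divisors]
    constructor
    · rintro ⟨⟨h1, hN⟩, hde⟩
      exact ⟨Nat.dvd_gcd hde.1 hde.2, hg.ne'⟩
    · rintro ⟨hdvd, -⟩
      have hl : 0 < ℓ := Nat.pos_of_dvd_of_pos hdvd hg
      have hle : ℓ ≤ d := Nat.le_of_dvd hdpos (hdvd.trans (Nat.gcd_dvd_left d e))
      exact ⟨⟨hl, hle.trans hdN⟩, hdvd.trans (Nat.gcd_dvd_left d e),
        hdvd.trans (Nat.gcd_dvd_right d e)⟩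
  rw [← Finset.sum_filter, hset, sum_phis s _ hg]

lemma innerDiagSum (s X : ℝ) (hX : 1 ≤ X) {ℓ : ℕ} (hℓ1 : 1 ≤ ℓ) :
    (∑ d ∈ Finset.Icc 1 ⌊X⌋₊, if ℓ ∣ d then (moebius d : ℝ) / (d : ℝ) ^ s else 0)
      = (moebius ℓ : ℝ) / (ℓ : ℝ) ^ s * mqs ℓ (X / ℓ) s := by
  have hℓpos : 0 < ℓ := hℓ1
  have hℓ0 : (ℓ : ℕ) ≠ 0 := hℓpos.ne'
  have hℓR : (0 : ℝ) < (ℓ : ℝ) := by exact_mod_cast hℓpos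
  have hX0 : (0 : ℝ) ≤ X := le_trans zero_le_one hX
  rw [← Finset.sum_filter]
  have key : (∑ d ∈ (Finset.Icc 1 ⌊X⌋₊).filter (fun d => ℓ ∣ d),
      (moebius d : ℝ) / (d : ℝ) ^ s)
      = ∑ m ∈ Finset.Icc 1 ⌊X / ℓ⌋₊,
        if Nat.gcd m ℓ = 1 then
          ((moebius ℓ : ℝ) / (ℓ : ℝ) ^ s) * ((moebius m : ℝ) / (m : ℝ) ^ s) else 0 := by
    refine Finset.sum_nbij' (fun d => d / ℓ) (fun m => ℓ * m) ?_ ?_ ?_ ?_ ?_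
    · intro d hd
      obtain ⟨hmem, hdvd⟩ := Finset.mem_filter.mp hd
      obtain ⟨hd1, hdN⟩ := Finset.mem_Icc.mp hmem
      rw [Finset.mem_Icc]
      constructor
      · rw [Nat.one_le_div_iff hℓpos]
        exact Nat.le_of_dvd hd1 hdvd
      · apply Nat.le_floor
        rw [Nat.cast_div hdvd (Nat.cast_ne_zero.mpr hℓ0)]
        have : (d : ℝ) ≤ X := le_trans (Nat.cast_le.mpr hdN) (Nat.floor_le hX0)
        gcongr
    · intro m hm
      obtain ⟨hm1, hmM⟩ := Finset.mem_Icc.mp hm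
      rw [Finset.mem_filter, Finset.mem_Icc]
      have hmX : (m : ℝ) ≤ X / ℓ :=
        le_trans (Nat.cast_le.mpr hmM) (Nat.floor_le (by positivity))
      refine ⟨⟨Nat.one_le_iff_ne_zero.mpr (Nat.mul_ne_zero hℓ0 (by omega)), ?_⟩, Dvd.intro m rfl⟩
      apply Nat.le_floor
      push_cast
      calc (ℓ : ℝ) * m ≤ (ℓ : ℝ) * (X / ℓ) := by gcongr
        _ = X := by field_simp
    · intro d hd
      exact Nat.mul_div_cancel' (Finset.mem_filter.mp hd).2
    · intro m _
      exact Nat.mul_div_cancel_left m hℓpos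
    · intro d hd
      obtain ⟨hmem, hdvd⟩ := Finset.mem_filter.mp hd
      obtain ⟨hd1, hdN⟩ := Finset.mem_Icc.mp hmem
      obtain ⟨m, rfl⟩ := hdvd
      simp only [Nat.mul_div_cancel_left _ hℓpos]
      have hm0 : m ≠ 0 := by rintro rfl; simp at hd1
      by_cases hg : Nat.gcd m ℓ = 1
      · rw [if_pos hg]
        have hco : Nat.Coprime ℓ m := Nat.coprime_comm.mp hg
        have hmu : moebius (ℓ * m) = moebius ℓ * moebius m :=
          isMultiplicative_moebius.map_mul_of_coprime hco
        have hcast : ((ℓ * m : ℕ) : ℝ) ^ s = (ℓ : ℝ) ^ s * (m : ℝ) ^ s := by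
          rw [Nat.cast_mul, Real.mul_rpow (Nat.cast_nonneg ℓ) (Nat.cast_nonneg m)]
        rw [hmu, hcast, Int.cast_mul, div_mul_div_comm]
      · rw [if_neg hg]
        obtain ⟨p, hp, hpdvd⟩ := Nat.exists_prime_and_dvd hg
        have hpm : p ∣ m := hpdvd.trans (Nat.gcd_dvd_left m ℓ)
        have hpl : p ∣ ℓ := hpdvd.trans (Nat.gcd_dvd_right m ℓ)
        have hnsq : ¬ Squarefree (ℓ * m) := by
          intro hsq
          exact hp.ne_one (Nat.isUnit_iff.mp (hsq p (mul_dvd_mul hpl hpm)))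
        rw [moebius_eq_zero_of_not_squarefree hnsq]
        simp
  rw [key, mqs, Finset.sum_filter, Finset.mul_sum]
  refine Finset.sum_congr rfl fun m _ => ?_
  split <;> simp

theorem Seps_diagonal_identity (ε X : ℝ) (hε : 0 ≤ ε) (hX : 1 ≤ X) :
    Seps ε X =
      ∑ ℓ ∈ Finset.Icc 1 ⌊X⌋₊,
        (ArithmeticFunction.moebius ℓ : ℝ) ^ 2 * phis (1 + ε) ℓ / (ℓ : ℝ) ^ (2 + 2 * ε) *
          (mqs ℓ (X / ℓ) (1 + ε)) ^ 2 ∧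
    0 ≤ Seps ε X := by
  have hs0 : (0 : ℝ) < 1 + ε := by linarith
  have step12 : Seps ε X = ∑ ℓ ∈ Finset.Icc 1 ⌊X⌋₊, phis (1 + ε) ℓ *
      (∑ d ∈ Finset.Icc 1 ⌊X⌋₊,
        if ℓ ∣ d then (moebius d : ℝ) / (d : ℝ) ^ (1 + ε) else 0) ^ 2 := by
    have hterm : ∀ d ∈ Finset.Icc 1 ⌊X⌋₊, ∀ e ∈ Finset.Icc 1 ⌊X⌋₊,
        ((moebius d : ℝ) * (moebius e : ℝ)) / (Nat.lcm d e : ℝ) ^ (1 + ε)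
        = ∑ ℓ ∈ Finset.Icc 1 ⌊X⌋₊, if ℓ ∣ d ∧ ℓ ∣ e then
            phis (1 + ε) ℓ * ((moebius d : ℝ) / (d : ℝ) ^ (1 + ε))
              * ((moebius e : ℝ) / (e : ℝ) ^ (1 + ε)) else 0 := by
      intro d hd e he
      obtain ⟨hd1, hdN⟩ := Finset.mem_Icc.mp hd
      obtain ⟨he1, heN⟩ := Finset.mem_Icc.mp he
      have hdR : (0 : ℝ) < (d : ℝ) := by exact_mod_cast hd1
      have heR : (0 : ℝ) < (e : ℝ) := by exact_mod_cast he1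
      have hlcm : 0 < Nat.lcm d e := Nat.pos_of_ne_zero (Nat.lcm_ne_zero (by omega) (by omega))
      have hlR : (0 : ℝ) < (Nat.lcm d e : ℝ) := by exact_mod_cast hlcm
      have hkey : ((Nat.gcd d e : ℝ)) ^ (1 + ε) * ((Nat.lcm d e : ℝ)) ^ (1 + ε)
          = (d : ℝ) ^ (1 + ε) * (e : ℝ) ^ (1 + ε) := by
        rw [← Real.mul_rpow (Nat.cast_nonneg _) (Nat.cast_nonneg _),
          ← Real.mul_rpow (Nat.cast_nonneg _) (Nat.cast_nonneg _),
          ← Nat.cast_mul, ← Nat.cast_mul, Nat.gcd_mul_lcm]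
      have h1 : ((moebius d : ℝ) * (moebius e : ℝ)) / (Nat.lcm d e : ℝ) ^ (1 + ε)
          = ((Nat.gcd d e : ℝ)) ^ (1 + ε) * ((moebius d : ℝ) / (d : ℝ) ^ (1 + ε))
            * ((moebius e : ℝ) / (e : ℝ) ^ (1 + ε)) := by
        have hd0 : (d : ℝ) ^ (1 + ε) ≠ 0 := (Real.rpow_pos_of_pos hdR _).ne'
        have he0 : (e : ℝ) ^ (1 + ε) ≠ 0 := (Real.rpow_pos_of_pos heR _).ne'
        have hl0 : (Nat.lcm d e : ℝ) ^ (1 + ε) ≠ 0 := (Real.rpow_pos_of_pos hlR _).ne'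
        field_simp
        linear_combination (-((moebius d : ℝ) * (moebius e : ℝ))) * hkey
      rw [h1, gcd_expand (1 + ε) ⌊X⌋₊ d e hd he, Finset.sum_mul, Finset.sum_mul]
      refine Finset.sum_congr rfl fun ℓ _ => ?_
      split_ifs with h
      · ring
      · simp
    calc Seps ε X = ∑ d ∈ Finset.Icc 1 ⌊X⌋₊, ∑ e ∈ Finset.Icc 1 ⌊X⌋₊,
          ∑ ℓ ∈ Finset.Icc 1 ⌊X⌋₊, (if ℓ ∣ d ∧ ℓ ∣ e then
            phis (1 + ε) ℓ * ((moebius d : ℝ) / (d : ℝ) ^ (1 + ε))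
              * ((moebius e : ℝ) / (e : ℝ) ^ (1 + ε)) else 0) := by
          unfold Seps
          exact Finset.sum_congr rfl fun d hd => Finset.sum_congr rfl fun e he =>
            hterm d hd e he
      _ = ∑ d ∈ Finset.Icc 1 ⌊X⌋₊, ∑ ℓ ∈ Finset.Icc 1 ⌊X⌋₊,
          ∑ e ∈ Finset.Icc 1 ⌊X⌋₊, (if ℓ ∣ d ∧ ℓ ∣ e then
            phis (1 + ε) ℓ * ((moebius d : ℝ) / (d : ℝ) ^ (1 + ε))
              * ((moebius e : ℝ) / (e : ℝ) ^ (1 + ε)) else 0) :=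
          Finset.sum_congr rfl fun d _ => Finset.sum_comm
      _ = ∑ ℓ ∈ Finset.Icc 1 ⌊X⌋₊, ∑ d ∈ Finset.Icc 1 ⌊X⌋₊,
          ∑ e ∈ Finset.Icc 1 ⌊X⌋₊, (if ℓ ∣ d ∧ ℓ ∣ e then
            phis (1 + ε) ℓ * ((moebius d : ℝ) / (d : ℝ) ^ (1 + ε))
              * ((moebius e : ℝ) / (e : ℝ) ^ (1 + ε)) else 0) := Finset.sum_comm
      _ = ∑ ℓ ∈ Finset.Icc 1 ⌊X⌋₊, phis (1 + ε) ℓ *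
          (∑ d ∈ Finset.Icc 1 ⌊X⌋₊,
            if ℓ ∣ d then (moebius d : ℝ) / (d : ℝ) ^ (1 + ε) else 0) ^ 2 := by
          refine Finset.sum_congr rfl fun ℓ _ => ?_
          have hpt : ∀ d e : ℕ, (if ℓ ∣ d ∧ ℓ ∣ e then
              phis (1 + ε) ℓ * ((moebius d : ℝ) / (d : ℝ) ^ (1 + ε))
                * ((moebius e : ℝ) / (e : ℝ) ^ (1 + ε)) else 0)
              = phis (1 + ε) ℓ *
                ((if ℓ ∣ d then (moebius d : ℝ) / (d : ℝ) ^ (1 + ε) else 0)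
                  * (if ℓ ∣ e then (moebius e : ℝ) / (e : ℝ) ^ (1 + ε) else 0)) := by
            intro d e
            by_cases h1 : ℓ ∣ d <;> by_cases h2 : ℓ ∣ e <;>
              simp only [h1, h2, and_self, and_true, and_false, false_and, true_and,
                if_true, if_false, mul_zero, zero_mul, mul_assoc]
          simp_rw [hpt, ← Finset.mul_sum, ← Finset.sum_mul, ← sq]
  have hmain : Seps ε X =
      ∑ ℓ ∈ Finset.Icc 1 ⌊X⌋₊,
        (ArithmeticFunction.moebius ℓ : ℝ) ^ 2 * phis (1 + ε) ℓ / (ℓ : ℝ) ^ (2 + 2 * ε) *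
          (mqs ℓ (X / ℓ) (1 + ε)) ^ 2 := by
    rw [step12]
    refine Finset.sum_congr rfl fun ℓ hℓ => ?_
    obtain ⟨hℓ1, hℓN⟩ := Finset.mem_Icc.mp hℓ
    have hℓR : (0 : ℝ) < (ℓ : ℝ) := by exact_mod_cast hℓ1
    rw [innerDiagSum (1 + ε) X hX hℓ1]
    have hll : (ℓ : ℝ) ^ (1 + ε) * (ℓ : ℝ) ^ (1 + ε) = (ℓ : ℝ) ^ (2 + 2 * ε) := by
      rw [← Real.rpow_add hℓR]
      congr 1
      ring
    have hl0 : (ℓ : ℝ) ^ (1 + ε) ≠ 0 := (Real.rpow_pos_of_pos hℓR _).ne'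
    rw [← hll]
    field_simp
  refine ⟨hmain, ?_⟩
  rw [hmain]
  refine Finset.sum_nonneg fun ℓ hℓ => ?_
  obtain ⟨hℓ1, hℓN⟩ := Finset.mem_Icc.mp hℓ
  have hφ : 0 ≤ phis (1 + ε) ℓ := by
    apply mul_nonneg (Real.rpow_nonneg (Nat.cast_nonneg ℓ) _)
    refine Finset.prod_nonneg fun p hp => ?_
    have hp2 : (1 : ℝ) ≤ (p : ℝ) := by
      exact_mod_cast (Nat.prime_of_mem_primeFactors hp).one_le
    have hps : (1 : ℝ) ≤ (p : ℝ) ^ (1 + ε) := Real.one_le_rpow hp2 (le_of_lt hs0)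
    have : 1 / (p : ℝ) ^ (1 + ε) ≤ 1 := by
      rw [div_le_one (lt_of_lt_of_le one_pos hps)]
      exact hps
    linarith
  apply mul_nonneg
  · apply div_nonneg (mul_nonneg (sq_nonneg _) hφ) (Real.rpow_nonneg (Nat.cast_nonneg ℓ) _)
  · exact sq_nonneg _
end

section
/- For every real ε > 0 and every real X > 0, ζ(1+ε)·S_ε(X) = ∑_{n=1}^{∞} (1/n^{1+ε})·( ∑_{d | n, d ≤ X} μ(d) )², where ζ is the Riemann zeta function, the inner sum runs over positive divisors d of n with d ≤ X, and the outer series converges. In particular S_ε(X) ≥ 0. -/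
/-- The Riemann zeta function for real `s > 1`, as the series `∑ n ≥ 1, n^{-s}`. -/
noncomputable def zetaR (s : ℝ) : ℝ := ∑' n : ℕ, 1 / ((n : ℝ) + 1) ^ s

open Finset ArithmeticFunction
lemma zsummable {s : ℝ} (hs : 1 < s) : Summable (fun n : ℕ => 1 / (n:ℝ) ^ s) :=
  (Real.summable_one_div_nat_rpow).2 hs

lemma div_summable' {s : ℝ} (hs : 1 < s) (k : ℕ) :
    Summable (fun n : ℕ => if k ∣ n then 1 / (n:ℝ) ^ s else 0) := by
  apply Summable.of_nonneg_of_le _ _ (zsummable hs)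
  · intro n; split <;> positivity
  · intro n; split
    · exact le_rfl
    · positivity

lemma div_tsum' {s : ℝ} (hs : 1 < s) {k : ℕ} (hk : 0 < k) :
    ∑' n : ℕ, (if k ∣ n then 1 / (n:ℝ) ^ s else 0)
      = (1 / (k:ℝ) ^ s) * ∑' n : ℕ, 1 / (n:ℝ) ^ s := by
  have hs0 : s ≠ 0 := by linarith
  rw [← tsum_mul_left]
  have hcompat : ∀ m : ℕ, (if k ∣ k * m then 1 / ((k * m : ℕ):ℝ) ^ s else 0)
      = 1 / (k:ℝ) ^ s * (1 / (m:ℝ) ^ s) := by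
    intro m
    rw [if_pos (Dvd.intro m rfl)]
    push_cast
    rw [Real.mul_rpow (by positivity) (by positivity), one_div, one_div, one_div, mul_inv]
  apply tsum_eq_tsum_of_ne_zero_bij (fun m => k * (m : ℕ))
  · intro a b hab
    exact Subtype.ext (Nat.eq_of_mul_eq_mul_left hk hab)
  · intro n hn
    simp only [Function.mem_support, ne_eq] at hn
    have hn0 : n ≠ 0 := by
      rintro rfl
      simp [Real.zero_rpow hs0] at hn
    have hkd : k ∣ n := by
      by_contra h
      simp [h] at hn
    obtain ⟨m, rfl⟩ := hkd
    have hm0 : m ≠ 0 := by rintro rfl; simp at hn0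
    refine ⟨⟨m, ?_⟩, rfl⟩
    simp only [Function.mem_support, ne_eq]
    have hkpos : (0:ℝ) < (k:ℝ) ^ s := Real.rpow_pos_of_pos (by exact_mod_cast hk) s
    have hmpos : (0:ℝ) < (m:ℝ) ^ s :=
      Real.rpow_pos_of_pos (by exact_mod_cast Nat.pos_of_ne_zero hm0) s
    positivity
  · intro m
    exact hcompat m

lemma parseval_inner_sum (X : ℝ) (hX : 0 < X) (n : ℕ) (hn : 0 < n) :
    ∑ d ∈ n.divisors.filter (fun d : ℕ => (d : ℝ) ≤ X), (moebius d : ℝ)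
      = ∑ d ∈ Finset.Icc 1 ⌊X⌋₊, if d ∣ n then (moebius d : ℝ) else 0 := by
  rw [← Finset.sum_filter]
  apply Finset.sum_congr _ (fun _ _ => rfl)
  ext d
  simp only [Finset.mem_filter, Nat.mem_divisors, Finset.mem_Icc, Nat.le_floor_iff hX.le]
  constructor
  · rintro ⟨⟨hd, -⟩, hdX⟩
    exact ⟨⟨Nat.pos_of_dvd_of_pos hd hn, hdX⟩, hd⟩
  · rintro ⟨⟨-, hdX⟩, hd⟩
    exact ⟨⟨hd, hn.ne'⟩, hdX⟩

theorem parseval_identity (ε X : ℝ) (hε : 0 < ε) (hX : 0 < X) :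
    Summable (fun n : ℕ =>
      1 / ((n : ℝ) + 1) ^ (1 + ε) *
        (∑ d ∈ (n + 1).divisors.filter (fun d : ℕ => (d : ℝ) ≤ X),
          (ArithmeticFunction.moebius d : ℝ)) ^ 2) ∧
    zetaR (1 + ε) * Seps ε X =
      ∑' n : ℕ,
        1 / ((n : ℝ) + 1) ^ (1 + ε) *
          (∑ d ∈ (n + 1).divisors.filter (fun d : ℕ => (d : ℝ) ≤ X),
            (ArithmeticFunction.moebius d : ℝ)) ^ 2 ∧
    0 ≤ Seps ε X := by
  set s : ℝ := 1 + ε with hs_def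
  have hs : 1 < s := by simp [hs_def]; linarith
  have hs0 : s ≠ 0 := by linarith
  set N := ⌊X⌋₊ with hN
  -- the function over all of ℕ
  set F : ℕ → ℝ := fun n =>
    1 / (n:ℝ) ^ s * (∑ d ∈ Finset.Icc 1 N, if d ∣ n then (moebius d : ℝ) else 0) ^ 2
    with hF_def
  -- the shifted function equals the one in the statement
  have hshift : ∀ n : ℕ,
      1 / ((n : ℝ) + 1) ^ s *
        (∑ d ∈ (n + 1).divisors.filter (fun d : ℕ => (d : ℝ) ≤ X),
          (moebius d : ℝ)) ^ 2 = F (n + 1) := by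
    intro n
    rw [hF_def]
    simp only
    rw [parseval_inner_sum X hX (n+1) n.succ_pos]
    push_cast
    ring
  -- bound on the inner sum
  have hbound : ∀ n : ℕ,
      (∑ d ∈ Finset.Icc 1 N, if d ∣ n then (moebius d : ℝ) else 0) ^ 2 ≤ (N:ℝ)^2 := by
    intro n
    have h1 : |∑ d ∈ Finset.Icc 1 N, if d ∣ n then (moebius d : ℝ) else 0| ≤ (N:ℝ) := by
      calc |∑ d ∈ Finset.Icc 1 N, if d ∣ n then (moebius d : ℝ) else 0|
          ≤ ∑ d ∈ Finset.Icc 1 N, |if d ∣ n then (moebius d : ℝ) else 0| :=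
            Finset.abs_sum_le_sum_abs _ _
        _ ≤ ∑ d ∈ Finset.Icc 1 N, (1:ℝ) := by
            apply Finset.sum_le_sum
            intro d _
            split
            · have h2 : |(moebius d : ℤ)| ≤ 1 := abs_moebius_le_one
              calc |((moebius d : ℤ) : ℝ)| = ((|(moebius d : ℤ)| : ℤ) : ℝ) := by
                    rw [Int.cast_abs]
                _ ≤ 1 := by exact_mod_cast h2
            · simp
        _ = (N:ℝ) := by rw [Finset.sum_const, Nat.card_Icc]; simp
    rw [← sq_abs]
    exact pow_le_pow_left₀ (abs_nonneg _) h1 2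
  have hFnonneg : ∀ n, 0 ≤ F n := by
    intro n; rw [hF_def]; positivity
  have hFsummable : Summable F := by
    apply Summable.of_nonneg_of_le hFnonneg _ ((zsummable hs).mul_left ((N:ℝ)^2))
    intro n
    rw [hF_def]
    simp only
    rw [mul_comm ((N:ℝ)^2)]
    apply mul_le_mul_of_nonneg_left (hbound n) (by positivity)
  -- expand F as a double sum
  have hFexpand : ∀ n : ℕ, F n = ∑ p ∈ (Finset.Icc 1 N) ×ˢ (Finset.Icc 1 N),
      ((moebius p.1 : ℝ) * (moebius p.2 : ℝ)) *
        (if Nat.lcm p.1 p.2 ∣ n then 1 / (n:ℝ) ^ s else 0) := by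
    intro n
    rw [hF_def]
    simp only
    rw [sq, Finset.sum_mul_sum, Finset.sum_product, Finset.mul_sum]
    apply Finset.sum_congr rfl
    intro d _
    rw [Finset.mul_sum]
    apply Finset.sum_congr rfl
    intro e _
    by_cases hd : d ∣ n <;> by_cases he : e ∣ n
    · rw [if_pos hd, if_pos he, if_pos (Nat.lcm_dvd hd he)]
      ring
    · rw [if_pos hd, if_neg he, if_neg (fun h => he ((Nat.dvd_lcm_right d e).trans h))]
      ring
    · rw [if_neg hd, if_pos he, if_neg (fun h => hd ((Nat.dvd_lcm_left d e).trans h))]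
      ring
    · rw [if_neg hd, if_neg he, if_neg (fun h => hd ((Nat.dvd_lcm_left d e).trans h))]
      ring
  -- summability of each piece
  have hpiece : ∀ p : ℕ × ℕ, Summable (fun n : ℕ =>
      ((moebius p.1 : ℝ) * (moebius p.2 : ℝ)) *
        (if Nat.lcm p.1 p.2 ∣ n then 1 / (n:ℝ) ^ s else 0)) := by
    intro p
    exact (div_summable' hs _).mul_left _
  set Z : ℝ := ∑' n : ℕ, 1 / (n:ℝ) ^ s with hZ_def
  -- tsum F
  have htsumF : ∑' n, F n = Z * Seps ε X := by
    calc ∑' n, F n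
        = ∑ p ∈ (Finset.Icc 1 N) ×ˢ (Finset.Icc 1 N),
            ∑' n : ℕ, ((moebius p.1 : ℝ) * (moebius p.2 : ℝ)) *
              (if Nat.lcm p.1 p.2 ∣ n then 1 / (n:ℝ) ^ s else 0) := by
          rw [← Summable.tsum_finsetSum (fun p _ => hpiece p)]
          exact tsum_congr hFexpand
      _ = ∑ p ∈ (Finset.Icc 1 N) ×ˢ (Finset.Icc 1 N),
            ((moebius p.1 : ℝ) * (moebius p.2 : ℝ)) / (Nat.lcm p.1 p.2 : ℝ) ^ s * Z := by
          apply Finset.sum_congr rfl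
          intro p hp
          rw [Finset.mem_product, Finset.mem_Icc, Finset.mem_Icc] at hp
          have hlcm : 0 < Nat.lcm p.1 p.2 := Nat.lcm_pos (by omega) (by omega)
          rw [tsum_mul_left, div_tsum' hs hlcm, ← hZ_def]
          ring
      _ = Z * Seps ε X := by
          rw [Seps, Finset.sum_product, Finset.mul_sum]
          apply Finset.sum_congr rfl
          intro d _
          rw [Finset.mul_sum]
          apply Finset.sum_congr rfl
          intro e _
          dsimp only
          ring
  -- shifted summability and value
  have hsummable : Summable (fun n : ℕ =>
      1 / ((n : ℝ) + 1) ^ s *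
        (∑ d ∈ (n + 1).divisors.filter (fun d : ℕ => (d : ℝ) ≤ X),
          (moebius d : ℝ)) ^ 2) := by
    rw [funext hshift]
    exact ((summable_nat_add_iff 1).2 hFsummable)
  have hF0 : F 0 = 0 := by
    rw [hF_def]
    simp [Real.zero_rpow hs0]
  have hZeq : Z = zetaR s := by
    rw [hZ_def, zetaR, Summable.tsum_eq_zero_add (zsummable hs)]
    simp [Real.zero_rpow hs0]
  have htsum_shift : ∑' n : ℕ, F (n + 1) = Z * Seps ε X := by
    rw [← htsumF, Summable.tsum_eq_zero_add hFsummable, hF0, zero_add]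
  refine ⟨hsummable, ?_, ?_⟩
  · rw [tsum_congr hshift, htsum_shift, hZeq]
  · have hZpos : 0 < Z := by
      have := Summable.tsum_pos (zsummable hs) (fun n => by positivity) 1 (by norm_num)
      rw [hZ_def]
      exact this
    have hnn : 0 ≤ Z * Seps ε X := htsumF ▸ tsum_nonneg hFnonneg
    nlinarith
end
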